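/- In a location-family random utility model on m ≥ 2 alternatives with measurable probability densities f_1,…,f_m that are strictly positive everywhere on ℝ, let D = (π^1,…,π^n) be data, and suppose alternative j is ranked above alternative j′ in at least one ranking π^i of D. Then there exists Q ∈ ℝ such that every θ ∈ ℝ^m with l(θ;D) ≥ l(0;D) satisfies θ_{j′} − θ_j < Q. In particular, θ_{j′} − θ_j is bounded above uniformly over all global maximizers of the log-likelihood. -/

import Mathlib

open MeasureTheory

/-- The probability that the ranking `π` is realized in a location-family random
utility model with noise densities `f j` and location parameters `θ j`. -/
noncomputable def rumProb {m : ℕ} (f : Fin m → ℝ → ℝ) (θ : Fin m → ℝ)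
    (π : Equiv.Perm (Fin m)) : ℝ :=
  ∫ x in {x : Fin m → ℝ | ∀ k l : Fin m, k < l → x (π l) < x (π k)},
    ∏ j, f j (x j - θ j)

/-- The log-likelihood of data `D` of rankings, valued in the extended reals
(so that rankings of probability `0` contribute `⊥ = −∞`). -/
noncomputable def logLik {m n : ℕ} (f : Fin m → ℝ → ℝ)
    (D : Fin n → Equiv.Perm (Fin m)) (θ : Fin m → ℝ) : EReal :=
  ∑ i, ENNReal.log (ENNReal.ofReal (rumProb f θ (D i)))

lemma ennreal_log_prod {ι : Type*} (s : Finset ι) (x : ι → ENNReal) :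
    ENNReal.log (∏ k ∈ s, x k) = ∑ k ∈ s, ENNReal.log (x k) := by
  classical
  induction s using Finset.induction with
  | empty => simp
  | insert _ _ h ih => rw [Finset.prod_insert h, Finset.sum_insert h, ENNReal.log_mul_add, ih]

/-- If alternative `j` is ranked above `j'` in at least one ranking of the data
(`(D i).symm j < (D i).symm j'`), then `θ_{j'} − θ_j` is bounded above, uniformly
over all `θ` whose log-likelihood is at least that of the all-zeros parameter
vector — in particular over all global maximizers of the log-likelihood. -/
theorem stmt11 (m : ℕ) (hm : 2 ≤ m) (f : Fin m → ℝ → ℝ)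
    (hmeas : ∀ j, Measurable (f j))
    (hpos : ∀ j x, 0 < f j x)
    (hint : ∀ j, ∫ x, f j x = 1)
    (n : ℕ) (D : Fin n → Equiv.Perm (Fin m))
    (j j' : Fin m) (i : Fin n) (hrank : (D i).symm j < (D i).symm j') :
    ∃ Q : ℝ, ∀ θ : Fin m → ℝ,
      logLik f D (fun _ => 0) ≤ logLik f D θ → θ j' - θ j < Q := by
  classical
  -- each density is integrable
  have hfint : ∀ k, Integrable (f k) := by
    intro k
    by_contra h
    have h1 := hint k
    rw [integral_undef h] at h1
    exact one_ne_zero h1.symm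
  -- integrability of the shifted product density
  have hInt : ∀ θ : Fin m → ℝ, Integrable (fun x : Fin m → ℝ => ∏ k, f k (x k - θ k)) := by
    intro θ
    exact Integrable.fintype_prod (f := fun k t => f k (t - θ k))
      fun k => (hfint k).comp_sub_right (θ k)
  have hIntnn : ∀ (θ : Fin m → ℝ) (x : Fin m → ℝ), 0 ≤ ∏ k, f k (x k - θ k) := fun θ x =>
    Finset.prod_nonneg fun k _ => (hpos k _).le
  -- total mass one
  have hTot : ∀ θ : Fin m → ℝ, ∫ x : Fin m → ℝ, ∏ k, f k (x k - θ k) = 1 := by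
    intro θ
    rw [MeasureTheory.integral_fintype_prod_volume_eq_prod (f := fun k t => f k (t - θ k))]
    have h1 : ∀ k : Fin m, ∫ t : ℝ, f k (t - θ k) = 1 := by
      intro k
      rw [integral_sub_right_eq_self (f k) (θ k)]
      exact hint k
    simp [h1]
  -- positivity of rumProb
  have hPos : ∀ (θ : Fin m → ℝ) (π : Equiv.Perm (Fin m)), 0 < rumProb f θ π := by
    intro θ π
    rw [rumProb]
    set S := {x : Fin m → ℝ | ∀ k l : Fin m, k < l → x (π l) < x (π k)} with hS
    have hSopen : IsOpen S := by
      have hrw : S = ⋂ (k : Fin m), ⋂ (l : Fin m),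
          {x : Fin m → ℝ | k < l → x (π l) < x (π k)} := by
        ext x; simp [hS, Set.mem_iInter]
      rw [hrw]
      refine isOpen_iInter_of_finite fun k => isOpen_iInter_of_finite fun l => ?_
      by_cases hkl : k < l
      · simpa [hkl] using (isOpen_lt (continuous_apply (π l)) (continuous_apply (π k)))
      · simp [hkl]
    have hSne : S.Nonempty := by
      refine ⟨fun a => -(((π.symm a : Fin m) : ℕ) : ℝ), ?_⟩
      intro k l hkl
      simp only [hS, Set.mem_setOf_eq, Equiv.symm_apply_apply]
      have h2 : (k : ℕ) < (l : ℕ) := hkl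
      have h3 : ((k : ℕ) : ℝ) < ((l : ℕ) : ℝ) := by exact_mod_cast h2
      linarith
    have hSpos : 0 < volume S := hSopen.measure_pos volume hSne
    have hsupp : Function.support (fun x : Fin m → ℝ => ∏ k, f k (x k - θ k)) = Set.univ :=
      Set.eq_univ_of_forall fun x => (Finset.prod_pos fun k _ => hpos k _).ne'
    rw [setIntegral_pos_iff_support_of_nonneg_ae (ae_of_all _ (hIntnn θ)) (hInt θ).integrableOn]
    rw [hsupp, Set.univ_inter]
    exact hSpos
  -- rumProb at most one
  have hLe1 : ∀ (θ : Fin m → ℝ) (π : Equiv.Perm (Fin m)), rumProb f θ π ≤ 1 := by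
    intro θ π
    rw [rumProb, ← hTot θ]
    exact setIntegral_le_integral (hInt θ) (ae_of_all _ (hIntnn θ))
  -- the unshifted product density F and the half-spaces T s
  set F : (Fin m → ℝ) → ℝ := fun x => ∏ k, f k (x k) with hFdef
  have hFmeas : Measurable F :=
    Finset.measurable_prod _ fun k _ => (hmeas k).comp (measurable_pi_apply k)
  have hFint : Integrable F := Integrable.fintype_prod (f := fun k => f k) hfint
  have hFnn : ∀ x, 0 ≤ F x := fun x => Finset.prod_nonneg fun k _ => (hpos k _).le
  set T : ℝ → Set (Fin m → ℝ) := fun s => {y : Fin m → ℝ | y j' - y j < s} with hTdef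
  have hTmeas : ∀ s, MeasurableSet (T s) := fun s =>
    measurableSet_lt ((measurable_pi_apply j').sub (measurable_pi_apply j)) measurable_const
  have hmono : ∀ s t : ℝ, s ≤ t → ∫ x in T s, F x ≤ ∫ x in T t, F x := by
    intro s t hst
    refine setIntegral_mono_set hFint.integrableOn (ae_of_all _ hFnn) ?_
    exact HasSubset.Subset.eventuallyLE fun x hx => lt_of_lt_of_le hx hst
  -- key upper bound on rumProb via the half-space
  have hbound : ∀ θ : Fin m → ℝ, rumProb f θ (D i) ≤ ∫ x in T (θ j - θ j'), F x := by
    intro θ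
    have hsub : {x : Fin m → ℝ | ∀ k l : Fin m, k < l → x ((D i) l) < x ((D i) k)} ⊆
        {x : Fin m → ℝ | x j' < x j} := by
      intro x hx
      have h1 := hx ((D i).symm j) ((D i).symm j') hrank
      simpa using h1
    have step1 : rumProb f θ (D i) ≤
        ∫ x in {x : Fin m → ℝ | x j' < x j}, ∏ k, f k (x k - θ k) := by
      rw [rumProb]
      exact setIntegral_mono_set (hInt θ).integrableOn (ae_of_all _ (hIntnn θ))
        (HasSubset.Subset.eventuallyLE hsub)
    refine step1.trans_eq ?_
    have hUmeas : MeasurableSet {x : Fin m → ℝ | x j' < x j} :=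
      measurableSet_lt (measurable_pi_apply j') (measurable_pi_apply j)
    rw [← integral_indicator hUmeas, ← integral_indicator (hTmeas _)]
    have heq : Set.indicator {x : Fin m → ℝ | x j' < x j}
        (fun x => ∏ k, f k (x k - θ k)) =
        fun x => Set.indicator (T (θ j - θ j')) F (x - θ) := by
      funext x
      have hxel : x ∈ {x : Fin m → ℝ | x j' < x j} ↔ x - θ ∈ T (θ j - θ j') := by
        simp only [hTdef, Set.mem_setOf_eq, Pi.sub_apply]
        constructor <;> intro h <;> linarith
      have hval : F (x - θ) = ∏ k, f k (x k - θ k) := by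
        simp [hFdef]
      by_cases hx : x ∈ {x : Fin m → ℝ | x j' < x j}
      · rw [Set.indicator_of_mem hx, Set.indicator_of_mem (hxel.1 hx), hval]
      · rw [Set.indicator_of_notMem hx, Set.indicator_of_notMem (fun hc => hx (hxel.2 hc))]
    rw [heq, integral_sub_right_eq_self (fun x => Set.indicator (T (θ j - θ j')) F x) θ]
  -- the half-space integral tends to 0 as the threshold tends to -∞
  have htends : Filter.Tendsto (fun N : ℕ => ∫ x in T (-(N : ℝ)), F x)
      Filter.atTop (nhds 0) := by
    have key := MeasureTheory.tendsto_integral_of_dominated_convergence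
      (μ := (volume : Measure (Fin m → ℝ)))
      (F := fun N x => Set.indicator (T (-(N : ℝ))) F x) (f := fun _ => (0 : ℝ))
      (bound := F)
      (fun N => (hFmeas.indicator (hTmeas _)).aestronglyMeasurable)
      hFint
      (fun N => ae_of_all _ fun x => by
        show ‖Set.indicator (T (-(N : ℝ))) F x‖ ≤ F x
        by_cases hx : x ∈ T (-(N : ℝ))
        · rw [Set.indicator_of_mem hx, Real.norm_eq_abs, abs_of_nonneg (hFnn x)]
        · rw [Set.indicator_of_notMem hx]
          simpa using hFnn x)
      (ae_of_all _ fun x => by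
        obtain ⟨N0, hN0⟩ := exists_nat_gt (-(x j' - x j))
        have hev : ∀ᶠ N : ℕ in Filter.atTop,
            Set.indicator (T (-(N : ℝ))) F x = 0 := by
          refine Filter.eventually_atTop.2 ⟨N0, fun N hN => ?_⟩
          apply Set.indicator_of_notMem
          simp only [hTdef, Set.mem_setOf_eq, not_lt]
          have h4 : (N0 : ℝ) ≤ (N : ℝ) := Nat.cast_le.2 hN
          linarith
        exact Filter.Tendsto.congr' (Filter.EventuallyEq.symm hev) tendsto_const_nhds)
    have hrw : ∀ N : ℕ, ∫ x, Set.indicator (T (-(N : ℝ))) F x = ∫ x in T (-(N : ℝ)), F x :=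
      fun N => integral_indicator (hTmeas _)
    simpa [hrw] using key
  -- constant c from the likelihood at zero
  have hterm0 : ∀ k : Fin n, 0 < rumProb f (fun _ => 0) (D k) := fun k => hPos _ _
  set c : ℝ := ∏ k, rumProb f (fun _ => 0) (D k) with hcdef
  have hcpos : 0 < c := Finset.prod_pos fun k _ => hterm0 k
  have hL0 : logLik f D (fun _ => 0) = ENNReal.log (ENNReal.ofReal c) := by
    rw [logLik, hcdef, ENNReal.ofReal_prod_of_nonneg (fun k _ => (hterm0 k).le),
      ennreal_log_prod]
  have hlogle : ∀ θ : Fin m → ℝ,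
      logLik f D θ ≤ ENNReal.log (ENNReal.ofReal (rumProb f θ (D i))) := by
    intro θ
    rw [logLik]
    have hterm : ∀ k : Fin n, ENNReal.log (ENNReal.ofReal (rumProb f θ (D k))) ≤ 0 := by
      intro k
      rw [ENNReal.log_le_zero_iff]
      exact ENNReal.ofReal_le_one.2 (hLe1 θ (D k))
    calc ∑ k, ENNReal.log (ENNReal.ofReal (rumProb f θ (D k)))
        = ENNReal.log (ENNReal.ofReal (rumProb f θ (D i))) +
          ∑ k ∈ Finset.univ.erase i, ENNReal.log (ENNReal.ofReal (rumProb f θ (D k))) :=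
          (Finset.add_sum_erase _ _ (Finset.mem_univ i)).symm
      _ ≤ ENNReal.log (ENNReal.ofReal (rumProb f θ (D i))) + 0 :=
          add_le_add_right (Finset.sum_nonpos fun k _ => hterm k) _
      _ = _ := add_zero _
  obtain ⟨N, hN⟩ := (htends.eventually (gt_mem_nhds hcpos)).exists
  refine ⟨N, fun θ hθ => ?_⟩
  have hkey : c ≤ rumProb f θ (D i) := by
    have h1 : ENNReal.log (ENNReal.ofReal c) ≤
        ENNReal.log (ENNReal.ofReal (rumProb f θ (D i))) :=
      (hL0 ▸ hθ).trans (hlogle θ)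
    have h2 := ENNReal.log_le_log_iff.1 h1
    exact (ENNReal.ofReal_le_ofReal_iff (hPos θ (D i)).le).1 h2
  by_contra hcon
  push_neg at hcon
  have h3 : ∫ x in T (θ j - θ j'), F x ≤ ∫ x in T (-(N : ℝ)), F x :=
    hmono _ _ (by linarith)
  have h4 := hbound θ
  linarith [hN]
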